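/- For θ with sin θ ≠ 0 and s ≥ 3, the characteristic determinant det(D^{-2} - (2 - 2cos θ)I) equals (sin((s+1)θ) + 3sin(sθ) - 4sin((s-1)θ) - 4sin θ)/sin θ, where D^{-2} is the s×s symmetric matrix with (D^{-2})_{11} = 5, other diagonal entries 2, off-diagonal entries (D^{-2})_{i,i+1} = -1, corner entries (D^{-2})_{1s} = (D^{-2})_{s1} = -2, and zeros elsewhere. -/

import Mathlib

open Matrix Real

namespace DetAux

set_option linter.unreachableTactic false
set_option linter.unusedTactic false

lemma succAbove_val {n : ℕ} (p : Fin (n+1)) (j : Fin n) :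
    ((p.succAbove j : Fin (n+1)) : ℕ) = if (j:ℕ) < (p:ℕ) then (j:ℕ) else (j:ℕ)+1 := by
  rcases lt_or_ge ((j:ℕ)) ((p:ℕ)) with h | h
  · rw [if_pos h, Fin.succAbove_of_castSucc_lt _ _ (by simpa [Fin.lt_def] using h)]
    simp
  · rw [if_neg (not_lt.2 h), Fin.succAbove_of_le_castSucc _ _ (by simpa [Fin.le_def] using h)]
    simp

lemma det_row_single {n : ℕ} (B : Matrix (Fin (n+1)) (Fin (n+1)) ℝ) (i j : Fin (n+1)) (c : ℝ)
    (h : ∀ k, B i k = if (k:ℕ) = (j:ℕ) then c else 0) :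
    B.det = (-1)^((i:ℕ)+(j:ℕ)) * c * (B.submatrix i.succAbove j.succAbove).det := by
  rw [Matrix.det_succ_row B i, Finset.sum_eq_single j]
  · rw [h j, if_pos rfl]
  · intro k _ hk
    rw [h k, if_neg (by simpa [Fin.ext_iff] using hk), mul_zero, zero_mul]
  · intro hj; exact absurd (Finset.mem_univ j) hj

lemma det_col_single {n : ℕ} (B : Matrix (Fin (n+1)) (Fin (n+1)) ℝ) (i j : Fin (n+1)) (c : ℝ)
    (h : ∀ k, B k j = if (k:ℕ) = (i:ℕ) then c else 0) :
    B.det = (-1)^((i:ℕ)+(j:ℕ)) * c * (B.submatrix i.succAbove j.succAbove).det := by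
  rw [Matrix.det_succ_column B j, Finset.sum_eq_single i]
  · rw [h i, if_pos rfl]
  · intro k _ hk
    rw [h k, if_neg (by simpa [Fin.ext_iff] using hk), mul_zero, zero_mul]
  · intro hi; exact absurd (Finset.mem_univ i) hi

/-- the tridiagonal matrix with diagonal `x` and off-diagonal `-1` -/
def tri (x : ℝ) (n : ℕ) : Matrix (Fin n) (Fin n) ℝ :=
  Matrix.of fun i j =>
    if (i:ℕ) = (j:ℕ) then x else if (i:ℕ)+1 = (j:ℕ) ∨ (j:ℕ)+1 = (i:ℕ) then -1 else 0

/-- continuant / Chebyshev-like recursion -/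
def dd (x : ℝ) : ℕ → ℝ
  | 0 => 1
  | 1 => x
  | (n+2) => x * dd x (n+1) - dd x n

lemma tri_det (x : ℝ) (n : ℕ) : (tri x n).det = dd x n := by
  induction n using Nat.strong_induction_on with
  | _ n ih =>
  match n, ih with
  | 0, _ => simp [dd]
  | 1, _ => rw [show dd x 1 = x from rfl, Matrix.det_fin_one]; simp [tri]
  | (n+2), ih =>
    set A := tri x (n+2) with hA
    set L : Fin (n+2) := Fin.last (n+1) with hLdef
    set u : Fin (n+2) → ℝ := fun j => if (j:ℕ) = n+1 then x else 0 with hu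
    set v : Fin (n+2) → ℝ := fun j => if (j:ℕ) = n then -1 else 0 with hv
    have hsplit : A = A.updateRow L (u + v) := by
      ext k j
      rw [Matrix.updateRow_apply]
      split_ifs with hk
      · subst hk
        have hj := j.isLt
        simp only [hA, tri, Matrix.of_apply, hu, hv, Pi.add_apply, hLdef, Fin.val_last]
        split_ifs <;> first | ring1 | omega | (exfalso; omega) | contradiction | (simp_all; done) | (simp_all; first | ring1 | omega | (exfalso; omega))
      · rfl
    have h2 : (A.updateRow L u).submatrix L.succAbove L.succAbove = tri x (n+1) := by
      ext i j
      have hi := i.isLt; have hj := j.isLt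
      rw [Matrix.submatrix_apply, Matrix.updateRow_apply, if_neg (Fin.succAbove_ne _ i)]
      simp only [hA, tri, Matrix.of_apply, succAbove_val, hLdef, Fin.val_last]
      split_ifs <;> first | ring1 | omega | (exfalso; omega) | contradiction | (simp_all; done) | (simp_all; first | ring1 | omega | (exfalso; omega))
    have h1 : (A.updateRow L u).det = x * dd x (n+1) := by
      rw [det_row_single (A.updateRow L u) L L x
        (fun k => by rw [Matrix.updateRow_self]; simp [hu, hLdef]), h2, ih (n+1) (by omega)]
      have : ((-1:ℝ))^(((L:ℕ)) + ((L:ℕ))) = 1 := Even.neg_one_pow ⟨(L:ℕ), rfl⟩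
      rw [this, one_mul]
    have hj0 : (n:ℕ) < n+2 := by omega
    set j0 : Fin (n+2) := ⟨n, hj0⟩ with hj0def
    set B1 := (A.updateRow L v).submatrix L.succAbove j0.succAbove with hB1
    have h4 : B1.submatrix (Fin.last n).succAbove (Fin.last n).succAbove = tri x n := by
      ext i j
      have hi := i.isLt; have hj := j.isLt
      simp only [hB1, Matrix.submatrix_apply]
      rw [Matrix.updateRow_apply, if_neg (Fin.succAbove_ne _ _)]
      simp only [hA, tri, Matrix.of_apply, succAbove_val, hLdef, hj0def, Fin.val_last]
      split_ifs <;> first | ring1 | omega | (exfalso; omega) | contradiction | (simp_all; done) | (simp_all; first | ring1 | omega | (exfalso; omega))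
    have h5 : ∀ k, B1 k (Fin.last n) = if (k:ℕ) = ((Fin.last n : Fin (n+1)):ℕ) then -1 else 0 := by
      intro k
      have hk := k.isLt
      simp only [hB1, Matrix.submatrix_apply]
      rw [Matrix.updateRow_apply, if_neg (Fin.succAbove_ne _ _)]
      simp only [hA, tri, Matrix.of_apply, succAbove_val, hLdef, hj0def, Fin.val_last]
      split_ifs <;> first | ring1 | omega | (exfalso; omega) | contradiction | (simp_all; done) | (simp_all; first | ring1 | omega | (exfalso; omega))
    have h6 : B1.det = - dd x n := by
      rw [det_col_single B1 (Fin.last n) (Fin.last n) (-1) h5, h4, ih n (by omega)]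
      have : ((-1:ℝ))^((((Fin.last n : Fin (n+1)):ℕ)) + (((Fin.last n : Fin (n+1)):ℕ))) = 1 :=
        Even.neg_one_pow ⟨_, rfl⟩
      rw [this]; ring
    have h7 : (A.updateRow L v).det = - dd x n := by
      rw [det_row_single (A.updateRow L v) L j0 (-1)
        (fun k => by rw [Matrix.updateRow_self]; try simp [hv, hj0def]), h6]
      have : ((-1:ℝ))^(((L:ℕ)) + ((j0:ℕ))) = -1 := by
        have : ((L:ℕ)) + ((j0:ℕ)) = 2*n+1 := by simp [hLdef, hj0def]; omega
        rw [this]; exact Odd.neg_one_pow ⟨n, by ring⟩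
      rw [this]; ring
    calc A.det = (A.updateRow L (u+v)).det := by rw [← hsplit]
    _ = (A.updateRow L u).det + (A.updateRow L v).det := Matrix.det_updateRow_add _ _ _ _
    _ = x * dd x (n+1) - dd x n := by rw [h1, h7]; ring
    _ = dd x (n+2) := rfl

lemma dd_eq (θ : ℝ) (hθ : Real.sin θ ≠ 0) (n : ℕ) :
    dd (2 * Real.cos θ) n = Real.sin (((n:ℝ)+1) * θ) / Real.sin θ := by
  induction n using Nat.strong_induction_on with
  | _ n ih =>
  match n, ih with
  | 0, _ => simp [dd]; rw [div_self hθ]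
  | 1, _ =>
    show 2 * Real.cos θ = _
    rw [show ((1:ℕ):ℝ) + 1 = 2 by norm_num, Real.sin_two_mul]
    field_simp
  | (n+2), ih =>
    have h1 := ih (n+1) (by omega)
    have h2 := ih n (by omega)
    push_cast at h1 h2 ⊢
    have key : Real.sin (((n:ℝ)+2+1)*θ) = 2*Real.cos θ * Real.sin (((n:ℝ)+1+1)*θ) - Real.sin (((n:ℝ)+1)*θ) := by
      have e1 : ((n:ℝ)+2+1)*θ = ((n:ℝ)+1+1)*θ + θ := by ring
      have e2 : ((n:ℝ)+1)*θ = ((n:ℝ)+1+1)*θ - θ := by ring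
      rw [e1, e2, Real.sin_add, Real.sin_sub]; ring
    rw [show dd (2*Real.cos θ) (n+2) = 2*Real.cos θ * dd (2*Real.cos θ) (n+1) - dd (2*Real.cos θ) n from rfl,
      h1, h2, key]
    field_simp

end DetAux

open DetAux

set_option maxHeartbeats 4000000 in
/-- The characteristic determinant `det(D⁻² - (2 - 2cos θ)·I)` equals
`(sin((s+1)θ) + 3sin(sθ) - 4sin((s-1)θ) - 4sin θ)/sin θ`. -/
theorem det_Dinvsq_sub_explicit (s : ℕ) (hs : 3 ≤ s) (θ : ℝ) (hθ : Real.sin θ ≠ 0)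
    (Dinvsq : Matrix (Fin s) (Fin s) ℝ)
    (hDinvsq : ∀ i j, Dinvsq i j =
      if (i : ℕ) = 0 ∧ (j : ℕ) = 0 then 5
      else if i = j then 2
      else if (i : ℕ) + 1 = (j : ℕ) ∨ (j : ℕ) + 1 = (i : ℕ) then -1
      else if ((i : ℕ) = 0 ∧ (j : ℕ) + 1 = s) ∨ ((i : ℕ) + 1 = s ∧ (j : ℕ) = 0) then -2
      else 0) :
    (Dinvsq - (2 - 2 * Real.cos θ) • (1 : Matrix (Fin s) (Fin s) ℝ)).det
      = (Real.sin ((s + 1) * θ) + 3 * Real.sin (s * θ)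
          - 4 * Real.sin ((s - 1) * θ) - 4 * Real.sin θ) / Real.sin θ := by
  obtain ⟨m, rfl⟩ : ∃ m, s = m + 3 := ⟨s - 3, by omega⟩
  set x : ℝ := 2 * Real.cos θ with hx
  set A := tri x (m+3) with hA
  set L : Fin (m+3) := Fin.last (m+2) with hLdef
  set u3 : Fin (m+3) → ℝ := fun j => if (j:ℕ) = 0 then 3 else 0 with hu3
  set u2 : Fin (m+3) → ℝ := fun j => if (j:ℕ) = m+2 then -2 else 0 with hu2
  set w : Fin (m+3) → ℝ := fun j => if (j:ℕ) = 0 then -2 else 0 with hw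
  have hL0 : L ≠ (0 : Fin (m+3)) := by
    simp [hLdef, Fin.ext_iff]
  have h0L : (0 : Fin (m+3)) ≠ L := hL0.symm
  have hLv : ((Fin.last (m+2) : Fin (m+3)) : ℕ) = m+2 := rfl
  have h0v : (((0 : Fin (m+3))) : ℕ) = 0 := rfl
  have h0v2 : (((0 : Fin (m+2))) : ℕ) = 0 := rfl
  have hLv2 : ((Fin.last (m+1) : Fin (m+2)) : ℕ) = m+1 := rfl
  set B := A.updateRow 0 (A 0 + (u3 + u2)) with hB
  set C := A.updateRow L w with hC
  -- identify the matrix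
  have hM : Dinvsq - (2 - 2 * Real.cos θ) • (1 : Matrix (Fin (m+3)) (Fin (m+3)) ℝ)
      = B.updateRow L (A L + w) := by
    ext i j
    have hi := i.isLt; have hj := j.isLt
    rw [Matrix.sub_apply, Matrix.smul_apply, Matrix.one_apply, hDinvsq i j,
      Matrix.updateRow_apply]
    simp only [hB, Matrix.updateRow_apply]
    simp only [hA, hu3, hu2, hw, hLdef, Pi.add_apply, tri, Matrix.of_apply,
      Fin.ext_iff, Fin.val_last, Fin.val_zero, hLv, h0v, h0v2, hLv2, smul_eq_mul, hx, or_false, false_or]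
    split_ifs <;> first | ring1 | omega | (exfalso; omega) | contradiction | (simp_all; done) | (simp_all; first | ring1 | omega | (exfalso; omega))
  rw [hM]
  -- split off the last row
  have hBL : B L = A L := by rw [hB, Matrix.updateRow_ne hL0]
  have e1 : (B.updateRow L (A L + w)).det = B.det + (B.updateRow L w).det := by
    rw [← hBL, Matrix.det_updateRow_add, Matrix.updateRow_eq_self]
  -- split first row of B
  have e2 : B.det = A.det + ((A.updateRow 0 u3).det + (A.updateRow 0 u2).det) := by
    rw [hB, Matrix.det_updateRow_add, Matrix.updateRow_eq_self, Matrix.det_updateRow_add]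
  -- commute updates for the w part
  have hcomm : B.updateRow L w = C.updateRow 0 (C 0 + (u3 + u2)) := by
    ext i j
    by_cases h1 : i = L <;> by_cases h2 : i = 0
    · exact absurd (h2 ▸ h1) h0L
    · simp [hB, hC, Matrix.updateRow_apply, h1, h2, hL0, h0L]
    · simp [hB, hC, Matrix.updateRow_apply, h1, h2, hL0, h0L]
    · simp [hB, hC, Matrix.updateRow_apply, h1, h2, hL0, h0L]
  have hC0 : C 0 = A 0 := by rw [hC, Matrix.updateRow_ne h0L]
  have e3 : (B.updateRow L w).det
      = C.det + ((C.updateRow 0 u3).det + (C.updateRow 0 u2).det) := by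
    rw [hcomm, Matrix.det_updateRow_add, Matrix.updateRow_eq_self, Matrix.det_updateRow_add]
  -- now the six determinants
  have hD1 : A.det = dd x (m+3) := tri_det x (m+3)
  -- D2
  have hD2 : (A.updateRow 0 u3).det = 3 * dd x (m+2) := by
    have hminor : (A.updateRow 0 u3).submatrix
        (Fin.succAbove 0) (Fin.succAbove 0) = tri x (m+2) := by
      ext i j
      have hi := i.isLt; have hj := j.isLt
      rw [Matrix.submatrix_apply, Matrix.updateRow_apply, if_neg (Fin.succAbove_ne _ _)]
      simp only [hA, tri, Matrix.of_apply, succAbove_val, Fin.val_zero, hLv, h0v, h0v2, hLv2, or_false, false_or]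
      split_ifs <;> first | ring1 | omega | (exfalso; omega) | contradiction | (simp_all; done) | (simp_all; first | ring1 | omega | (exfalso; omega))
    rw [det_row_single (A.updateRow 0 u3) 0 0 3
      (fun k => by rw [Matrix.updateRow_self]; simp [hu3]), hminor, tri_det]
    norm_num
  -- D3
  have hD3 : (A.updateRow 0 u2).det = -2 := by
    set M3 := (A.updateRow 0 u2).submatrix (Fin.succAbove 0) (Fin.succAbove L) with hM3
    have htri : M3.BlockTriangular id := by
      intro i j hij
      have hij2 : (j:ℕ) < (i:ℕ) := hij
      have hi := i.isLt; have hj := j.isLt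
      simp only [hM3, Matrix.submatrix_apply]
      rw [Matrix.updateRow_apply, if_neg (Fin.succAbove_ne _ _)]
      simp only [hA, tri, Matrix.of_apply, succAbove_val, Fin.val_zero, hLdef, Fin.val_last, hLv, h0v, h0v2, hLv2, or_false, false_or]
      split_ifs <;> first | ring1 | omega | (exfalso; omega) | contradiction | (simp_all; done) | (simp_all; first | ring1 | omega | (exfalso; omega)) | (simp_all; split_ifs <;> first | rfl | (exfalso; omega))
    have hdiag : ∀ i, M3 i i = -1 := by
      intro i
      have hi := i.isLt
      simp only [hM3, Matrix.submatrix_apply]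
      rw [Matrix.updateRow_apply, if_neg (Fin.succAbove_ne _ _)]
      simp only [hA, tri, Matrix.of_apply, succAbove_val, Fin.val_zero, hLdef, Fin.val_last, hLv, h0v, h0v2, hLv2, or_false, false_or]
      split_ifs <;> first | ring1 | omega | (exfalso; omega) | contradiction | (simp_all; done) | (simp_all; first | ring1 | omega | (exfalso; omega))
    have hdet3 : M3.det = (-1)^(m+2) := by
      rw [Matrix.det_of_upperTriangular htri]
      rw [Finset.prod_congr rfl (fun i _ => hdiag i), Finset.prod_const, Finset.card_univ,
        Fintype.card_fin]
    rw [det_row_single (A.updateRow 0 u2) 0 L (-2)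
      (fun k => by rw [Matrix.updateRow_self]; simp [hu2, hLdef]), ← hM3, hdet3]
    simp only [hLdef, h0v, hLv, zero_add]
    have hsq : ((-1:ℝ))^(m+2) * ((-1:ℝ))^(m+2) = 1 := by
      rw [← pow_add]; exact Even.neg_one_pow ⟨m+2, by ring⟩
    linear_combination (-2:ℝ) * hsq
  -- D4
  have hD4 : C.det = -2 := by
    set M4 := C.submatrix (Fin.succAbove L) (Fin.succAbove 0) with hM4
    have htri : M4.BlockTriangular OrderDual.toDual := by
      intro i j hij
      have hij' : (i:ℕ) < (j:ℕ) := hij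
      have hi := i.isLt; have hj := j.isLt
      simp only [hM4, hC, Matrix.submatrix_apply]
      rw [Matrix.updateRow_apply, if_neg (Fin.succAbove_ne _ _)]
      simp only [hA, tri, Matrix.of_apply, succAbove_val, Fin.val_zero, hLdef, Fin.val_last, hLv, h0v, h0v2, hLv2, or_false, false_or]
      split_ifs <;> first | ring1 | omega | (exfalso; omega) | contradiction | (simp_all; done) | (simp_all; first | ring1 | omega | (exfalso; omega)) | (simp_all; split_ifs <;> first | rfl | (exfalso; omega))
    have hdiag : ∀ i, M4 i i = -1 := by
      intro i
      have hi := i.isLt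
      simp only [hM4, hC, Matrix.submatrix_apply]
      rw [Matrix.updateRow_apply, if_neg (Fin.succAbove_ne _ _)]
      simp only [hA, tri, Matrix.of_apply, succAbove_val, Fin.val_zero, hLdef, Fin.val_last, hLv, h0v, h0v2, hLv2, or_false, false_or]
      split_ifs <;> first | ring1 | omega | (exfalso; omega) | contradiction | (simp_all; done) | (simp_all; first | ring1 | omega | (exfalso; omega))
    have hdet4 : M4.det = (-1)^(m+2) := by
      rw [Matrix.det_of_lowerTriangular M4 htri]
      rw [Finset.prod_congr rfl (fun i _ => hdiag i), Finset.prod_const, Finset.card_univ,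
        Fintype.card_fin]
    rw [det_row_single C L 0 (-2)
      (fun k => by rw [hC, Matrix.updateRow_self]; simp [hw]), ← hM4, hdet4]
    simp only [hLdef, h0v, hLv, add_zero]
    have hsq : ((-1:ℝ))^(m+2) * ((-1:ℝ))^(m+2) = 1 := by
      rw [← pow_add]; exact Even.neg_one_pow ⟨m+2, by ring⟩
    linear_combination (-2:ℝ) * hsq
  -- D5
  have hD5 : (C.updateRow 0 u3).det = 0 := by
    have hminor0 : ((C.updateRow 0 u3).submatrix
        (Fin.succAbove 0) (Fin.succAbove 0)).det = 0 := by
      apply Matrix.det_eq_zero_of_row_eq_zero (⟨m+1, by omega⟩ : Fin (m+2))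
      intro j
      have hj := j.isLt
      simp only [Matrix.submatrix_apply, hC, Matrix.updateRow_apply, hA, tri, Matrix.of_apply,
        hu3, hw, succAbove_val, Fin.ext_iff, Fin.val_zero, hLdef, Fin.val_last, hLv, h0v, h0v2, hLv2, or_false, false_or]
      split_ifs <;> first | ring1 | omega | (exfalso; omega) | contradiction | (simp_all; done) | (simp_all; first | ring1 | omega | (exfalso; omega))
    rw [det_row_single (C.updateRow 0 u3) 0 0 3
      (fun k => by rw [Matrix.updateRow_self]; simp [hu3]), hminor0]
    ring
  -- D6
  have hD6 : (C.updateRow 0 u2).det = -4 * dd x (m+1) := by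
    set M6 := (C.updateRow 0 u2).submatrix (Fin.succAbove 0) (Fin.succAbove L) with hM6
    have hrow : ∀ k, M6 (Fin.last (m+1)) k
        = if (k:ℕ) = ((0 : Fin (m+2)):ℕ) then -2 else 0 := by
      intro k
      have hk := k.isLt
      simp only [hM6, Matrix.submatrix_apply, hC, Matrix.updateRow_apply, hA, tri,
        Matrix.of_apply, hu2, hw, succAbove_val, Fin.ext_iff, Fin.val_zero, hLdef, Fin.val_last, hLv, h0v, h0v2, hLv2, or_false, false_or]
      split_ifs <;> first | ring1 | omega | (exfalso; omega) | contradiction | (simp_all; done) | (simp_all; first | ring1 | omega | (exfalso; omega))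
    have hminor : M6.submatrix (Fin.succAbove (Fin.last (m+1))) (Fin.succAbove 0)
        = tri x (m+1) := by
      ext i j
      have hi := i.isLt; have hj := j.isLt
      simp only [hM6, Matrix.submatrix_apply, hC, Matrix.updateRow_apply, hA, tri,
        Matrix.of_apply, hu2, hw, succAbove_val, Fin.ext_iff, Fin.val_zero, hLdef, Fin.val_last, hLv, h0v, h0v2, hLv2, or_false, false_or]
      split_ifs <;> first | ring1 | omega | (exfalso; omega) | contradiction | (simp_all; done) | (simp_all; first | ring1 | omega | (exfalso; omega))
    have hdet6 : M6.det = (-1)^(m+1) * (-2) * dd x (m+1) := by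
      rw [det_row_single M6 (Fin.last (m+1)) 0 (-2) hrow, hminor, tri_det]
      simp only [hLv2, h0v2, add_zero]
    rw [det_row_single (C.updateRow 0 u2) 0 L (-2)
      (fun k => by rw [Matrix.updateRow_self]; simp [hu2, hLdef]), ← hM6, hdet6]
    simp only [hLdef, h0v, hLv, zero_add]
    have hodd : ((-1:ℝ))^(m+2) * ((-1:ℝ))^(m+1) = -1 := by
      rw [← pow_add]; exact Odd.neg_one_pow ⟨m+1, by ring⟩
    linear_combination (4 * dd x (m+1)) * hodd
  -- assemble
  rw [e1, e2, e3, hD1, hD2, hD3, hD4, hD5, hD6]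
  rw [dd_eq θ hθ (m+3), dd_eq θ hθ (m+2), dd_eq θ hθ (m+1)]
  push_cast
  have a1 : ((m:ℝ)+3+1)*θ = ((m:ℝ)+4)*θ := by ring
  have a2 : ((m:ℝ)+2+1)*θ = ((m:ℝ)+3)*θ := by ring
  have a3 : ((m:ℝ)+1+1)*θ = ((m:ℝ)+2)*θ := by ring
  have a4 : ((m:ℝ)+3-1)*θ = ((m:ℝ)+2)*θ := by ring
  rw [a1, a2, a3]
  rw [show ((m:ℝ)+3-1) = ((m:ℝ)+2) from by ring]
  field_simp
  ring
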